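/- arXiv:2410.12516 — 2 statements merged into one kernel-verified Lean document; each statement's English description precedes it below -/
import Mathlib

section
/- Let 𝒜_ε be a ℂ_ε-linear braided monoidal category with free Hom-spaces whose reduction 𝒜_0 modulo ε is symmetric monoidal with symmetry β_0 = [β]_0. Define t_{X,Y} := [β²_{X,Y} − id_{X⊗Y}]_1: X⊗Y → X⊗Y in 𝒜_0, where β² denotes the double braiding. Then each t_{X,Y} is well-defined, t is natural in X and Y, and t is symmetric in the sense that (β_0)_{Y,X} ∘ t_{Y,X} ∘ (β_0)_{X,Y} = t_{X,Y}. -/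
/-!
STATEMENT 7: Let `𝒜_ε` be a `ℂ_ε`-linear braided monoidal category with free Hom-spaces
whose reduction mod `ε` is symmetric, i.e. the double braiding `β² := β_{Y,X} ∘ β_{X,Y}`
is congruent to the identity modulo `ε`.  Then `t_{X,Y} := [β²_{X,Y} − id]₁` is
well-defined (any two representatives agree mod `ε`), natural in `X` and `Y`, and
symmetric: `β₀_{Y,X} ∘ t_{Y,X} ∘ β₀_{X,Y} = t_{X,Y}` (an equality mod `ε`, with the
braiding itself representing the symmetry `β₀` of the reduction).
-/

open CategoryTheory MonoidalCategory

universe v u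

open DualNumber TrivSqZeroExt

lemma eps_dvd_of_mul_eq_zero (x : DualNumber ℂ) (h : (eps : DualNumber ℂ) * x = 0) :
    ∃ y, x = eps * y := by
  refine ⟨inl x.snd, ?_⟩
  have h1 : x.fst = 0 := by simpa using congrArg TrivSqZeroExt.snd h
  ext <;> simp [h1]

lemma eps_smul_surj_of_eps_smul_eq_zero {M : Type*} [AddCommGroup M]
    [Module (DualNumber ℂ) M] [Module.Free (DualNumber ℂ) M] (m : M)
    (h : (eps : DualNumber ℂ) • m = 0) : ∃ u, m = (eps : DualNumber ℂ) • u := by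
  classical
  set b := Module.Free.chooseBasis (DualNumber ℂ) M
  have hc : ∀ i, (eps : DualNumber ℂ) * b.repr m i = 0 := by
    intro i
    have := congrArg (fun v => b.repr v i) h
    simpa using this
  choose y hy using fun i => eps_dvd_of_mul_eq_zero _ (hc i)
  refine ⟨(b.repr m).sum fun i _ => y i • b i, ?_⟩
  conv_lhs => rw [← b.linearCombination_repr m]
  rw [Finsupp.linearCombination_apply, Finsupp.sum, Finsupp.sum, Finset.smul_sum]
  exact Finset.sum_congr rfl fun i _ => by rw [smul_smul, ← hy]

theorem statement_7
    (A : Type u) [Category.{v} A] [MonoidalCategory A] [BraidedCategory A]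
    [Preadditive A] [Linear (DualNumber ℂ) A]
    [MonoidalPreadditive A] [MonoidalLinear (DualNumber ℂ) A]
    -- free Hom-spaces:
    (hfree : ∀ X Y : A, Module.Free (DualNumber ℂ) (X ⟶ Y))
    -- the reduction mod ε is symmetric: β² ≡ id (mod ε):
    (hsym : ∀ X Y : A, ∃ u : X ⊗ Y ⟶ X ⊗ Y,
      (β_ X Y).hom ≫ (β_ Y X).hom - 𝟙 (X ⊗ Y) = (DualNumber.eps : DualNumber ℂ) • u) :
    -- t_{X,Y} := [β² − id]₁ is well-defined: representatives exist and any two agree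
    -- modulo ε:
    (∀ X Y : A, ∃ t : X ⊗ Y ⟶ X ⊗ Y,
      (β_ X Y).hom ≫ (β_ Y X).hom - 𝟙 (X ⊗ Y) = (DualNumber.eps : DualNumber ℂ) • t) ∧
    (∀ (X Y : A) (t t' : X ⊗ Y ⟶ X ⊗ Y),
      (β_ X Y).hom ≫ (β_ Y X).hom - 𝟙 (X ⊗ Y) = (DualNumber.eps : DualNumber ℂ) • t →
      (β_ X Y).hom ≫ (β_ Y X).hom - 𝟙 (X ⊗ Y) = (DualNumber.eps : DualNumber ℂ) • t' →
      ∃ u, t - t' = (DualNumber.eps : DualNumber ℂ) • u) ∧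
    -- naturality of t in X and Y (mod ε):
    (∀ (X X' Y Y' : A) (f : X ⟶ X') (g : Y ⟶ Y')
       (t : X ⊗ Y ⟶ X ⊗ Y) (t' : X' ⊗ Y' ⟶ X' ⊗ Y'),
      (β_ X Y).hom ≫ (β_ Y X).hom - 𝟙 (X ⊗ Y) = (DualNumber.eps : DualNumber ℂ) • t →
      (β_ X' Y').hom ≫ (β_ Y' X').hom - 𝟙 (X' ⊗ Y')
          = (DualNumber.eps : DualNumber ℂ) • t' →
      ∃ u, (f ⊗ₘ g) ≫ t' - t ≫ (f ⊗ₘ g) = (DualNumber.eps : DualNumber ℂ) • u) ∧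
    -- symmetry of t: β₀_{Y,X} ∘ t_{Y,X} ∘ β₀_{X,Y} = t_{X,Y} (mod ε):
    (∀ (X Y : A) (t : X ⊗ Y ⟶ X ⊗ Y) (t' : Y ⊗ X ⟶ Y ⊗ X),
      (β_ X Y).hom ≫ (β_ Y X).hom - 𝟙 (X ⊗ Y) = (DualNumber.eps : DualNumber ℂ) • t →
      (β_ Y X).hom ≫ (β_ X Y).hom - 𝟙 (Y ⊗ X) = (DualNumber.eps : DualNumber ℂ) • t' →
      ∃ u, (β_ X Y).hom ≫ t' ≫ (β_ Y X).hom - t = (DualNumber.eps : DualNumber ℂ) • u) := by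
  refine ⟨hsym, ?_, ?_, ?_⟩
  · -- well-definedness
    intro X Y t t' ht ht'
    haveI := hfree (X ⊗ Y) (X ⊗ Y)
    refine eps_smul_surj_of_eps_smul_eq_zero _ ?_
    rw [smul_sub, ← ht, ← ht', sub_self]
  · -- naturality
    intro X X' Y Y' f g t t' ht ht'
    haveI := hfree (X ⊗ Y) (X' ⊗ Y')
    refine eps_smul_surj_of_eps_smul_eq_zero _ ?_
    have hnat : (f ⊗ₘ g) ≫ ((β_ X' Y').hom ≫ (β_ Y' X').hom)
        = ((β_ X Y).hom ≫ (β_ Y X).hom) ≫ (f ⊗ₘ g) := by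
      rw [← Category.assoc, BraidedCategory.braiding_naturality, Category.assoc,
        BraidedCategory.braiding_naturality, Category.assoc]
    rw [smul_sub, ← Linear.comp_smul, ← Linear.smul_comp, ← ht, ← ht',
      Preadditive.comp_sub, Preadditive.sub_comp, Category.comp_id, Category.id_comp, hnat]
    abel
  · -- symmetry
    intro X Y t t' ht ht'
    haveI := hfree (X ⊗ Y) (X ⊗ Y)
    refine eps_smul_surj_of_eps_smul_eq_zero _ ?_
    have hsq : ((eps : DualNumber ℂ) • t) ≫ ((eps : DualNumber ℂ) • t) = 0 := by
      rw [Linear.smul_comp, Linear.comp_smul, smul_smul, eps_mul_eps, zero_smul]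
    have hassoc : (β_ X Y).hom ≫ ((β_ Y X).hom ≫ (β_ X Y).hom) ≫ (β_ Y X).hom
        = ((β_ X Y).hom ≫ (β_ Y X).hom) ≫ ((β_ X Y).hom ≫ (β_ Y X).hom) := by
      simp only [Category.assoc]
    have hb2 : (β_ X Y).hom ≫ (β_ Y X).hom = 𝟙 (X ⊗ Y) + (eps : DualNumber ℂ) • t := by
      rw [← ht]; abel
    have h1 : (eps : DualNumber ℂ) • ((β_ X Y).hom ≫ t' ≫ (β_ Y X).hom)
        = (β_ X Y).hom ≫ ((eps : DualNumber ℂ) • t') ≫ (β_ Y X).hom := by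
      simp only [Linear.comp_smul, Linear.smul_comp]
    have hfull : (β_ X Y).hom ≫ (β_ Y X).hom ≫ (β_ X Y).hom ≫ (β_ Y X).hom
        = 𝟙 (X ⊗ Y) + (eps : DualNumber ℂ) • t + (eps : DualNumber ℂ) • t := by
      calc (β_ X Y).hom ≫ (β_ Y X).hom ≫ (β_ X Y).hom ≫ (β_ Y X).hom
          = ((β_ X Y).hom ≫ (β_ Y X).hom) ≫ ((β_ X Y).hom ≫ (β_ Y X).hom) := by
            simp only [Category.assoc]
        _ = (𝟙 (X ⊗ Y) + (eps : DualNumber ℂ) • t) ≫ (𝟙 (X ⊗ Y) + (eps : DualNumber ℂ) • t) := by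
            rw [hb2]
        _ = 𝟙 (X ⊗ Y) + (eps : DualNumber ℂ) • t + (eps : DualNumber ℂ) • t := by
            simp only [Preadditive.add_comp, Preadditive.comp_add, Category.comp_id,
              Category.id_comp, hsq, add_zero]
    rw [smul_sub, h1, ← ht', ← ht]
    simp only [Preadditive.sub_comp, Preadditive.comp_sub, Category.id_comp,
      Category.comp_id, Category.assoc]
    rw [hfull, hb2]
    abel
end

section
/- The ring ℂ[[ħ]], viewed as an object of the category of ħ-adically complete ℂ[[ħ]]-modules, is an α-compact strong generator for every regular cardinal α > ℵ₀: the functor Hom(ℂ[[ħ]], −) is conservative, and it preserves α-filtered colimits (computed in complete modules, i.e. as completions of the underlying colimits). Consequently the category of complete ℂ[[ħ]]-modules is locally α-presentable for α > ℵ₀. Key step: for an α-filtered diagram F of complete modules with α > ℵ₀, the colimit of F taken in ℂ[[ħ]]-modules is already complete, i.e. (colim F)^∧ ≅ colim F. -/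
/-!
STATEMENT 16: `ℂ[[ħ]]` is an `α`-compact strong generator of the category of
`ħ`-adically complete `ℂ[[ħ]]`-modules for every `α > ℵ₀`:
`Hom(ℂ[[ħ]], −)` is conservative (and `Hom(ℂ[[ħ]], M) ≅ M` naturally), and it preserves
`α`-filtered colimits of complete modules.  Key step: an `α`-filtered (here:
countably-directed) colimit of complete modules, computed in `ℂ[[ħ]]`-modules, is
already complete, i.e. `(colim F)^∧ ≅ colim F`.  (Consequently the category of complete
`ℂ[[ħ]]`-modules is locally `α`-presentable for `α > ℵ₀`.)
-/

noncomputable abbrev hbarIdeal : Ideal (PowerSeries ℂ) :=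
  Ideal.span {(PowerSeries.X : PowerSeries ℂ)}

private lemma mem_pow_smul_iff {M : Type*} [AddCommGroup M] [Module (PowerSeries ℂ) M]
    (n : ℕ) (z : M) :
    z ∈ (hbarIdeal ^ n • ⊤ : Submodule (PowerSeries ℂ) M) ↔
      ∃ y, z = ((PowerSeries.X : PowerSeries ℂ) ^ n) • y := by
  rw [hbarIdeal, Ideal.span_singleton_pow, Submodule.ideal_span_singleton_smul]
  constructor
  · rintro h
    rcases Set.mem_smul_set.1 h with ⟨y, -, rfl⟩
    exact ⟨y, rfl⟩
  · rintro ⟨y, rfl⟩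
    exact Submodule.smul_mem_pointwise_smul y _ ⊤ trivial

theorem statement_16 :
    -- Hom(ℂ[[ħ]], −) is conservative on complete modules:
    (∀ (C D : Type) [AddCommGroup C] [Module (PowerSeries ℂ) C]
        [AddCommGroup D] [Module (PowerSeries ℂ) D],
      IsAdicComplete hbarIdeal C → IsAdicComplete hbarIdeal D →
      ∀ f : C →ₗ[PowerSeries ℂ] D,
        Function.Bijective
          (fun g : (PowerSeries ℂ) →ₗ[PowerSeries ℂ] C => f ∘ₗ g) →
        Function.Bijective f) ∧
    -- Hom(ℂ[[ħ]], M) ≅ M naturally (evaluation at 1), so ℂ[[ħ]] is a generator and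
    -- Hom(ℂ[[ħ]], −) preserves exactly those colimits that exist in complete modules:
    (∀ (M : Type) [AddCommGroup M] [Module (PowerSeries ℂ) M],
      ∃ e : ((PowerSeries ℂ) →ₗ[PowerSeries ℂ] M) ≃ₗ[PowerSeries ℂ] M,
        ∀ g, e g = g 1) ∧
    -- key step (α-compactness of ℂ[[ħ]] for α > ℵ₀): a countably-directed colimit of
    -- complete modules, computed in ℂ[[ħ]]-modules, is already complete:
    (∀ (ι : Type) [Preorder ι] [IsDirected ι (· ≤ ·)] [DecidableEq ι],
      -- ι is ℵ₁-directed: every countable subset has an upper bound: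
      (∀ s : Set ι, s.Countable → ∃ ub : ι, ∀ i ∈ s, i ≤ ub) →
      ∀ (G : ι → Type) [∀ i, AddCommGroup (G i)] [∀ i, Module (PowerSeries ℂ) (G i)]
        (f : ∀ i j, i ≤ j → G i →ₗ[PowerSeries ℂ] G j),
        DirectedSystem G (fun i j h => f i j h) →
        (∀ i, IsAdicComplete hbarIdeal (G i)) →
        IsAdicComplete hbarIdeal (Module.DirectLimit G f)) := by
  refine ⟨?_, ?_, ?_⟩
  · -- conservativity
    intro C D _ _ _ _ _ _ f hbij
    have key : ∀ c : C, f c =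
        (LinearMap.ringLmapEquivSelf (PowerSeries ℂ) (PowerSeries ℂ) D)
          ((fun g : (PowerSeries ℂ) →ₗ[PowerSeries ℂ] C => f ∘ₗ g)
            ((LinearMap.ringLmapEquivSelf (PowerSeries ℂ) (PowerSeries ℂ) C).symm c)) := by
      intro c
      simp [LinearMap.ringLmapEquivSelf]
      exact congrArg f (one_smul (PowerSeries ℂ) c).symm
    have : Function.Bijective f := by
      have h1 := (LinearMap.ringLmapEquivSelf (PowerSeries ℂ) (PowerSeries ℂ) C).symm.bijective
      have h2 := (LinearMap.ringLmapEquivSelf (PowerSeries ℂ) (PowerSeries ℂ) D).bijective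
      have : f = fun c => (LinearMap.ringLmapEquivSelf (PowerSeries ℂ) (PowerSeries ℂ) D)
          ((fun g : (PowerSeries ℂ) →ₗ[PowerSeries ℂ] C => f ∘ₗ g)
            ((LinearMap.ringLmapEquivSelf (PowerSeries ℂ) (PowerSeries ℂ) C).symm c)) :=
        funext key
      rw [show (⇑f : C → D) = _ from this]
      exact (h2.comp hbij).comp h1
    exact this
  · -- Hom(R, M) ≃ M
    intro M _ _
    exact ⟨LinearMap.ringLmapEquivSelf (PowerSeries ℂ) (PowerSeries ℂ) M, fun g => rfl⟩
  · -- key step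
    intro ι _ _ _ hcd G _ _ f hsys hcomp
    haveI := hsys
    haveI : Nonempty ι := by
      obtain ⟨ub, -⟩ := hcd ∅ Set.countable_empty
      exact ⟨ub⟩
    refine { toIsHausdorff := ⟨?_⟩, toIsPrecomplete := ⟨?_⟩ }
    · -- Hausdorff
      intro z hz
      obtain ⟨i, a, rfl⟩ := Module.DirectLimit.exists_of z
      have h1 : ∀ n : ℕ, ∃ (k : ι) (hik : i ≤ k),
          f i k hik a ∈ (hbarIdeal ^ n • ⊤ : Submodule (PowerSeries ℂ) (G k)) := by
        intro n
        have hzn := hz n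
        rw [SModEq.sub_mem, sub_zero, mem_pow_smul_iff] at hzn
        obtain ⟨y, hy⟩ := hzn
        obtain ⟨j, b, rfl⟩ := Module.DirectLimit.exists_of y
        obtain ⟨k, hik, hjk⟩ := exists_ge_ge i j
        have hz0 : Module.DirectLimit.of (PowerSeries ℂ) ι G f k
            (f i k hik a - f j k hjk (((PowerSeries.X : PowerSeries ℂ) ^ n) • b)) = 0 := by
          rw [map_sub, Module.DirectLimit.of_f, Module.DirectLimit.of_f, map_smul, ← hy,
            sub_self]
        obtain ⟨k', hkk', hk'⟩ := Module.DirectLimit.of.zero_exact hz0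
        refine ⟨k', hik.trans hkk', ?_⟩
        rw [mem_pow_smul_iff]
        refine ⟨f j k' (hjk.trans hkk') b, ?_⟩
        rw [map_sub, Module.DirectedSystem.map_map f, Module.DirectedSystem.map_map f] at hk'
        have := sub_eq_zero.mp hk'
        rw [map_smul] at this
        exact this
      choose k hik hmem using h1
      obtain ⟨K, hKub⟩ := hcd (Set.range k) (Set.countable_range k)
      have hkK : ∀ n, k n ≤ K := fun n => hKub _ (Set.mem_range_self n)
      have hiK : i ≤ K := (hik 0).trans (hkK 0)
      have hzero : f i K hiK a = 0 := by
        apply IsHausdorff.haus' (I := hbarIdeal)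
        intro n
        rw [SModEq.sub_mem, sub_zero, mem_pow_smul_iff]
        obtain ⟨y, hy⟩ := (mem_pow_smul_iff n _).mp (hmem n)
        refine ⟨f (k n) K (hkK n) y, ?_⟩
        have hcomm : f i K hiK a = f (k n) K (hkK n) (f i (k n) (hik n) a) :=
          (Module.DirectedSystem.map_map f _ _ _).symm
        rw [hcomm, hy, map_smul]
      calc Module.DirectLimit.of (PowerSeries ℂ) ι G f i a
          = Module.DirectLimit.of (PowerSeries ℂ) ι G f K (f i K hiK a) :=
            (Module.DirectLimit.of_f).symm
        _ = 0 := by rw [hzero, map_zero]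
    · -- Precomplete
      intro F hF
      choose i a ha using fun n => Module.DirectLimit.exists_of (f := f) (F n)
      have h2 : ∀ n : ℕ, ∃ (j : ι) (b : G j),
          F n - F (n + 1) = ((PowerSeries.X : PowerSeries ℂ) ^ n) •
            Module.DirectLimit.of (PowerSeries ℂ) ι G f j b := by
        intro n
        have := hF (Nat.le_succ n)
        rw [SModEq.sub_mem, mem_pow_smul_iff] at this
        obtain ⟨y, hy⟩ := this
        obtain ⟨j, b, rfl⟩ := Module.DirectLimit.exists_of y
        exact ⟨j, b, hy⟩
      choose j b hb using h2
      have h3 : ∀ n : ℕ, ∃ (m : ι) (h1 : i n ≤ m) (h2 : i (n + 1) ≤ m) (h3 : j n ≤ m),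
          f (i n) m h1 (a n) - f (i (n + 1)) m h2 (a (n + 1)) =
            ((PowerSeries.X : PowerSeries ℂ) ^ n) • f (j n) m h3 (b n) := by
        intro n
        obtain ⟨p, hp1, hp2⟩ := exists_ge_ge (i n) (i (n + 1))
        obtain ⟨q, hq1, hq2⟩ := exists_ge_ge p (j n)
        have hz0 : Module.DirectLimit.of (PowerSeries ℂ) ι G f q
            (f (i n) q (hp1.trans hq1) (a n) - f (i (n + 1)) q (hp2.trans hq1) (a (n + 1)) -
              ((PowerSeries.X : PowerSeries ℂ) ^ n) • f (j n) q hq2 (b n)) = 0 := by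
          rw [map_sub, map_sub, map_smul, Module.DirectLimit.of_f, Module.DirectLimit.of_f,
            Module.DirectLimit.of_f, ha, ha, ← hb, sub_self]
        obtain ⟨m, hqm, hm⟩ := Module.DirectLimit.of.zero_exact hz0
        refine ⟨m, (hp1.trans hq1).trans hqm, (hp2.trans hq1).trans hqm, hq2.trans hqm, ?_⟩
        rw [map_sub, map_sub, map_smul, Module.DirectedSystem.map_map f, Module.DirectedSystem.map_map f,
          Module.DirectedSystem.map_map f] at hm
        exact sub_eq_zero.mp hm
      choose m hm1 hm2 hm3 hmeq using h3
      obtain ⟨K, hKub⟩ := hcd (Set.range i ∪ Set.range m)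
        ((Set.countable_range i).union (Set.countable_range m))
      have hiK : ∀ n, i n ≤ K := fun n => hKub _ (Or.inl ⟨n, rfl⟩)
      have hmK : ∀ n, m n ≤ K := fun n => hKub _ (Or.inr ⟨n, rfl⟩)
      have hjK : ∀ n, j n ≤ K := fun n => (hm3 n).trans (hmK n)
      set A : ℕ → G K := fun n => f (i n) K (hiK n) (a n) with hA
      have hstep : ∀ n, A n - A (n + 1) =
          ((PowerSeries.X : PowerSeries ℂ) ^ n) • f (j n) K (hjK n) (b n) := by
        intro n
        have := congrArg (f (m n) K (hmK n)) (hmeq n)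
        rw [map_sub, map_smul, Module.DirectedSystem.map_map f, Module.DirectedSystem.map_map f,
          Module.DirectedSystem.map_map f] at this
        exact this
      have hcau : ∀ {p q : ℕ}, p ≤ q →
          A p ≡ A q [SMOD (hbarIdeal ^ p • ⊤ : Submodule (PowerSeries ℂ) (G K))] := by
        intro p q hpq
        induction q, hpq using Nat.le_induction with
        | base => rfl
        | succ q hpq ih =>
          refine ih.trans ?_
          rw [SModEq.sub_mem, mem_pow_smul_iff]
          rw [hstep q]
          refine ⟨((PowerSeries.X : PowerSeries ℂ) ^ (q - p)) • f (j q) K (hjK q) (b q), ?_⟩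
          rw [smul_smul, ← pow_add, Nat.add_sub_cancel' hpq]
      obtain ⟨B, hB⟩ := IsPrecomplete.prec (hcomp K).toIsPrecomplete hcau
      refine ⟨Module.DirectLimit.of (PowerSeries ℂ) ι G f K B, ?_⟩
      intro n
      rw [SModEq.sub_mem, mem_pow_smul_iff]
      have hBn := hB n
      rw [SModEq.sub_mem, mem_pow_smul_iff] at hBn
      obtain ⟨y, hy⟩ := hBn
      refine ⟨Module.DirectLimit.of (PowerSeries ℂ) ι G f K y, ?_⟩
      have hFn : F n = Module.DirectLimit.of (PowerSeries ℂ) ι G f K (A n) := by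
        rw [hA]
        dsimp only
        rw [Module.DirectLimit.of_f, ha]
      rw [hFn, ← map_sub, hy, map_smul]
end
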